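/- arXiv:1709.06294 — 3 statements merged into one kernel-verified Lean document; each statement's English description precedes it below -/
import Mathlib

section
/- Let K ≥ 1 and let D_1, …, D_K be mutually independent nonnegative real random variables such that D_t has probability density f_t(r) = 2π λ_t r exp(−π λ_t r²) on r ≥ 0. Then for every tier index k, the probability P( for all t ≠ k, P_k D_k^{−α} > P_t D_t^{−α} ) equals A_k = λ_k P_k^{2/α} / Σ_{t=1}^{K} λ_t P_t^{2/α}. -/
open MeasureTheory ProbabilityTheory Real

open Filter

lemma rayleigh_integral_Ioi {b : ℝ} (hb : 0 < b) (a : ℝ) :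
    ∫ s in Set.Ioi a, 2 * b * s * Real.exp (-(b * s ^ 2)) = Real.exp (-(b * a ^ 2)) := by
  have hderiv : ∀ x ∈ Set.Ici a, HasDerivAt (fun s => -Real.exp (-(b * s ^ 2)))
      (2 * b * x * Real.exp (-(b * x ^ 2))) x := by
    intro x _
    have h1 : HasDerivAt (fun s : ℝ => -(b * s ^ 2)) (-(b * (2 * x))) x := by
      have h0 : HasDerivAt (fun s : ℝ => b * s ^ 2) (b * (2 * x)) x := by
        simpa using (hasDerivAt_pow 2 x).const_mul b
      exact h0.neg
    have h2 := (Real.hasDerivAt_exp (-(b * x ^ 2))).comp x h1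
    convert (show HasDerivAt (fun s => -Real.exp (-(b * s ^ 2))) (-(Real.exp (-(b * x ^ 2)) * -(b * (2 * x)))) x from h2.neg) using 1
    ring
  have hint : IntegrableOn (fun s => 2 * b * s * Real.exp (-(b * s ^ 2))) (Set.Ioi a) := by
    have h := ((integrable_mul_exp_neg_mul_sq hb).const_mul (2 * b)).integrableOn
      (s := Set.Ioi a)
    refine h.congr_fun (fun x _ => ?_) measurableSet_Ioi
    simp only [neg_mul]; ring
  have htend : Tendsto (fun s => -Real.exp (-(b * s ^ 2))) atTop (nhds 0) := by
    rw [← neg_zero]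
    refine Tendsto.neg (Real.tendsto_exp_atBot.comp ?_)
    have h1 : Tendsto (fun s : ℝ => b * s ^ 2) atTop atTop :=
      (tendsto_pow_atTop (by norm_num)).const_mul_atTop hb
    exact tendsto_neg_atTop_atBot.comp h1
  have := integral_Ioi_of_hasDerivAt_of_tendsto' hderiv hint htend
  rw [this]; ring

noncomputable def rayleighDens (l : ℝ) : ℝ → ENNReal := fun r =>
  ENNReal.ofReal (if 0 ≤ r then 2 * π * l * r * Real.exp (-(π * l * r ^ 2)) else 0)

lemma rayleighDens_measurable (l : ℝ) : Measurable (rayleighDens l) := by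
  apply Measurable.ennreal_ofReal
  apply Measurable.ite measurableSet_Ici (by fun_prop) measurable_const

lemma rayleigh_meas_Ioi {l : ℝ} (hl : 0 < l) {a : ℝ} (ha : 0 ≤ a) :
    (volume.withDensity (rayleighDens l)) (Set.Ioi a)
      = ENNReal.ofReal (Real.exp (-(π * l * a ^ 2))) := by
  rw [withDensity_apply _ measurableSet_Ioi]
  have h1 : ∀ r ∈ Set.Ioi a, rayleighDens l r
      = ENNReal.ofReal (2 * (π * l) * r * Real.exp (-(π * l * r ^ 2))) := by
    intro r hr
    have : (0:ℝ) ≤ r := le_of_lt (lt_of_le_of_lt ha hr)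
    simp only [rayleighDens, if_pos this]
    ring_nf
  rw [setLIntegral_congr_fun measurableSet_Ioi h1]
  have hb : 0 < π * l := by positivity
  have hint : IntegrableOn (fun r => 2 * (π * l) * r * Real.exp (-(π * l * r ^ 2)))
      (Set.Ioi a) := by
    have h := ((integrable_mul_exp_neg_mul_sq hb).const_mul (2 * (π * l))).integrableOn
      (s := Set.Ioi a)
    refine h.congr_fun (fun x _ => ?_) measurableSet_Ioi
    simp only [neg_mul]; ring
  rw [← ofReal_integral_eq_lintegral_ofReal hint]
  · congr 1
    exact rayleigh_integral_Ioi hb a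
  · refine (ae_restrict_iff' measurableSet_Ioi).2 (Filter.Eventually.of_forall fun r hr => ?_)
    have : (0:ℝ) ≤ r := le_of_lt (lt_of_le_of_lt ha hr)
    positivity

lemma rayleigh_meas_Iic (l : ℝ) :
    (volume.withDensity (rayleighDens l)) (Set.Iic 0) = 0 := by
  rw [withDensity_apply _ measurableSet_Iic]
  have h1 : ∀ r ∈ Set.Iic 0, rayleighDens l r = 0 := by
    intro r hr
    simp only [rayleighDens]
    rcases eq_or_lt_of_le (Set.mem_Iic.mp hr) with h | h
    · subst h; simp
    · rw [if_neg (not_le.2 h)]; simp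
  rw [setLIntegral_congr_fun measurableSet_Iic h1]
  simp
lemma slice_meas {l p q a r : ℝ} (hl : 0 < l) (hp : 0 < p) (hq : 0 < q)
    (ha : 0 < a) (hr : 0 < r) :
    (volume.withDensity (rayleighDens l)) {s : ℝ | p * s ^ (-a) < q * r ^ (-a)}
      = ENNReal.ofReal (Real.exp (-(π * l * ((p / q) ^ (2 / a)) * r ^ 2))) := by
  set A := {s : ℝ | p * s ^ (-a) < q * r ^ (-a)} with hA
  have hpq : (0:ℝ) < p / q := div_pos hp hq
  set c : ℝ := (p / q) ^ (a⁻¹) with hc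
  have hcpos : 0 < c := Real.rpow_pos_of_pos hpq _
  set τ : ℝ := c * r with hτdef
  have hτ : 0 < τ := mul_pos hcpos hr
  have key : ∀ s : ℝ, 0 < s → (s ∈ A ↔ τ < s) := by
    intro s hs
    have hτpow : τ ^ (-a) = (q / p) * r ^ (-a) := by
      rw [hτdef, Real.mul_rpow hcpos.le hr.le, hc, ← Real.rpow_mul hpq.le]
      rw [show a⁻¹ * (-a) = -1 by field_simp, Real.rpow_neg_one, ← one_div,
        one_div_div]
    have h1 : q * r ^ (-a) = p * ((q / p) * r ^ (-a)) := by field_simp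
    rw [hA, Set.mem_setOf_eq, h1, mul_lt_mul_iff_right₀ hp, ← hτpow]
    exact Real.rpow_lt_rpow_iff_of_neg hs hτ (by linarith)
  have hAmeas : MeasurableSet A := by
    have : Measurable fun s : ℝ => p * s ^ (-a) := by fun_prop
    exact measurableSet_lt this measurable_const
  have hsplit : (volume.withDensity (rayleighDens l)) A
      = (volume.withDensity (rayleighDens l)) (A ∩ Set.Ioi 0) := by
    have h0 : (volume.withDensity (rayleighDens l)) (A \ Set.Ioi 0) = 0 :=
      measure_mono_null (fun s hs => by
        simpa using not_lt.mp fun h => hs.2 h) (rayleigh_meas_Iic l)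
    refine le_antisymm ?_ (measure_mono Set.inter_subset_left)
    calc (volume.withDensity (rayleighDens l)) A
        = (volume.withDensity (rayleighDens l)) (A ∩ Set.Ioi 0 ∪ A \ Set.Ioi 0) := by
          rw [Set.inter_union_diff]
      _ ≤ (volume.withDensity (rayleighDens l)) (A ∩ Set.Ioi 0)
          + (volume.withDensity (rayleighDens l)) (A \ Set.Ioi 0) := measure_union_le _ _
      _ = (volume.withDensity (rayleighDens l)) (A ∩ Set.Ioi 0) := by rw [h0, add_zero]
  have hinter : A ∩ Set.Ioi 0 = Set.Ioi τ := by
    ext s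
    constructor
    · rintro ⟨hsA, hs0⟩; exact (key s hs0).mp hsA
    · intro hs
      have hs0 : 0 < s := lt_trans hτ hs
      exact ⟨(key s hs0).mpr hs, hs0⟩
  have hτsq : τ ^ 2 = (p / q) ^ (2 / a) * r ^ 2 := by
    rw [hτdef, mul_pow, hc, ← Real.rpow_natCast ((p/q) ^ a⁻¹) 2,
      ← Real.rpow_mul hpq.le, show (a⁻¹ * ((2:ℕ):ℝ)) = 2 / a by push_cast; ring]
  rw [hsplit, hinter, rayleigh_meas_Ioi hl hτ.le, hτsq]
  ring_nf
lemma outer_integral {l S : ℝ} (hl : 0 < l) (hS : 0 < S) :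
    ∫ r in Set.Ioi (0:ℝ), 2 * π * l * r * Real.exp (-(π * S * r ^ 2)) = l / S := by
  have hb : 0 < π * S := by positivity
  have h := rayleigh_integral_Ioi hb 0
  have heq : ∀ r : ℝ, 2 * π * l * r * Real.exp (-(π * S * r ^ 2))
      = (l / S) * (2 * (π * S) * r * Real.exp (-(π * S * r ^ 2))) := by
    intro r; field_simp
  simp_rw [heq]
  rw [integral_const_mul, h]
  norm_num
/-- Lemma 1 (tier-association probability): if `D_1, …, D_K` are mutually independent
nonnegative random variables, `D_t` having Rayleigh-type density
`f_t(r) = 2π λ_t r exp(−π λ_t r²)` on `r ≥ 0`, then for every tier `k`,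
`P(∀ t ≠ k, P_k D_k^{−α} > P_t D_t^{−α}) = λ_k P_k^{2/α} / Σ_t λ_t P_t^{2/α}`. -/
theorem association_probability
    {Ω : Type*} [MeasurableSpace Ω] (μ : Measure Ω) [IsProbabilityMeasure μ]
    (K : ℕ) (hK : 1 ≤ K) (lam P : Fin K → ℝ) (α : ℝ)
    (hlam : ∀ t, 0 < lam t) (hP : ∀ t, 0 < P t) (hα : 2 < α)
    (D : Fin K → Ω → ℝ) (hmeas : ∀ t, Measurable (D t))
    (hpos : ∀ t ω, 0 ≤ D t ω)
    (hindep : iIndepFun D μ)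
    (hdens : ∀ t, μ.map (D t) = volume.withDensity (fun r =>
      ENNReal.ofReal (if 0 ≤ r then 2 * π * lam t * r * Real.exp (-(π * lam t * r ^ 2)) else 0)))
    (k : Fin K) :
    μ {ω | ∀ t, t ≠ k → P k * D k ω ^ (-α) > P t * D t ω ^ (-α)} =
      ENNReal.ofReal (lam k * P k ^ (2 / α) / ∑ t, lam t * P t ^ (2 / α)) := by
  obtain ⟨n, rfl⟩ : ∃ n, K = n + 1 := ⟨K - 1, by omega⟩
  have hα0 : 0 < α := by linarith
  set ν : Fin (n+1) → Measure ℝ := fun t => volume.withDensity (rayleighDens (lam t)) with hν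
  have hdens' : ∀ t, μ.map (D t) = ν t := fun t => hdens t
  have hprob : ∀ t, IsProbabilityMeasure (ν t) := fun t => by
    rw [← hdens' t]; exact Measure.isProbabilityMeasure_map (hmeas t).aemeasurable
  haveI : ∀ t, SigmaFinite (ν t) := fun t => by
    haveI := hprob t; infer_instance
  -- joint distribution is the product measure
  have hjm : Measurable (fun ω (i : Fin (n+1)) => D i ω) := measurable_pi_lambda _ hmeas
  have hjoint : μ.map (fun ω i => D i ω) = Measure.pi ν := by
    refine (Measure.pi_eq fun s hs => ?_).symm
    rw [Measure.map_apply hjm (MeasurableSet.univ_pi hs)]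
    have hpre : (fun ω i => D i ω) ⁻¹' Set.pi Set.univ s = ⋂ i ∈ Finset.univ, D i ⁻¹' s i := by
      ext ω; simp [Set.mem_pi]
    rw [hpre, hindep.measure_inter_preimage_eq_mul Finset.univ (fun i _ => hs i)]
    exact Finset.prod_congr rfl fun i _ => by
      rw [← hdens' i, Measure.map_apply (hmeas i) (hs i)]
  -- rewrite the event
  set σ : Fin n → Fin (n+1) := k.succAbove with hσ
  set S : Set (Fin (n+1) → ℝ) :=
    {x | ∀ j, P (σ j) * (x (σ j)) ^ (-α) < P k * (x k) ^ (-α)} with hS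
  have hSmeas : MeasurableSet S := by
    have hrw : S = ⋂ j, {x : Fin (n+1) → ℝ | P (σ j) * (x (σ j)) ^ (-α) < P k * (x k) ^ (-α)} := by
      ext x; simp [hS]
    rw [hrw]
    exact MeasurableSet.iInter fun j => measurableSet_lt (by fun_prop) (by fun_prop)
  have hevent : {ω | ∀ t, t ≠ k → P k * D k ω ^ (-α) > P t * D t ω ^ (-α)}
      = (fun ω i => D i ω) ⁻¹' S := by
    ext ω
    simp only [Set.mem_setOf_eq, Set.mem_preimage, hS, gt_iff_lt]
    constructor
    · intro h j; exact h (σ j) (Fin.succAbove_ne k j)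
    · intro h t ht
      obtain ⟨j, rfl⟩ := Fin.exists_succAbove_eq ht
      exact h j
  rw [hevent, ← Measure.map_apply hjm hSmeas, hjoint]
  -- split off coordinate k
  set e := MeasurableEquiv.piFinSuccAbove (fun _ : Fin (n+1) => ℝ) k with he
  have hmp : MeasurePreserving e.symm ((ν k).prod (Measure.pi fun j => ν (σ j)))
      (Measure.pi ν) := (measurePreserving_piFinSuccAbove ν k).symm
  have h1 : Measure.pi ν S = ((ν k).prod (Measure.pi fun j => ν (σ j))) (e.symm ⁻¹' S) :=
    (hmp.measure_preimage hSmeas.nullMeasurableSet).symm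
  set T : Set (ℝ × (Fin n → ℝ)) :=
    {p | ∀ j, P (σ j) * (p.2 j) ^ (-α) < P k * p.1 ^ (-α)} with hT
  have hTset : e.symm ⁻¹' S = T := by
    ext p
    simp only [Set.mem_preimage, hS, Set.mem_setOf_eq, hT, he,
      MeasurableEquiv.piFinSuccAbove_symm_apply, MeasurableEquiv.symm_mk, MeasurableEquiv.coe_mk,
      Equiv.symm_symm, Fin.insertNthEquiv_apply, hσ, Fin.insertNth_apply_same,
      Fin.insertNth_apply_succAbove]
  have hTmeas : MeasurableSet T := by
    have hrw : T = ⋂ j, {p : ℝ × (Fin n → ℝ) |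
        P (σ j) * (p.2 j) ^ (-α) < P k * p.1 ^ (-α)} := by ext p; simp [hT]
    rw [hrw]
    exact MeasurableSet.iInter fun j => measurableSet_lt (by fun_prop) (by fun_prop)
  rw [h1, hTset, Measure.prod_apply hTmeas]
  -- the inner (sliced) measure
  set W : ℝ := ∑ j, π * lam (σ j) * ((P (σ j) / P k) ^ (2/α)) with hW
  have hslice : ∀ r ∈ Set.Ioi (0:ℝ), (Measure.pi fun j => ν (σ j)) (Prod.mk r ⁻¹' T)
      = ENNReal.ofReal (Real.exp (-(W * r ^ 2))) := by
    intro r hr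
    have hpre : Prod.mk r ⁻¹' T
        = Set.pi Set.univ fun j => {s : ℝ | P (σ j) * s ^ (-α) < P k * r ^ (-α)} := by
      ext y; simp [hT, Set.mem_pi]
    rw [hpre, Measure.pi_pi]
    rw [Finset.prod_congr rfl fun j _ =>
      slice_meas (hlam (σ j)) (hP (σ j)) (hP k) hα0 hr]
    rw [← ENNReal.ofReal_prod_of_nonneg (fun j _ => (Real.exp_pos _).le), ← Real.exp_sum]
    congr 2
    rw [hW, Finset.sum_mul, ← Finset.sum_neg_distrib]
  have hIoi_ae : Set.Ioi (0:ℝ) ∈ ae (ν k) := by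
    rw [mem_ae_iff, Set.compl_Ioi]
    exact rayleigh_meas_Iic (lam k)
  have hae : (fun r => (Measure.pi fun j => ν (σ j)) (Prod.mk r ⁻¹' T)) =ᵐ[ν k]
      fun r => ENNReal.ofReal (Real.exp (-(W * r ^ 2))) :=
    Filter.eventuallyEq_of_mem hIoi_ae hslice
  rw [lintegral_congr_ae hae]
  -- unfold the density of ν k
  have hgmeas : Measurable fun r : ℝ => ENNReal.ofReal (Real.exp (-(W * r ^ 2))) := by fun_prop
  rw [show ν k = volume.withDensity (rayleighDens (lam k)) from rfl,
    lintegral_withDensity_eq_lintegral_mul volume (rayleighDens_measurable (lam k)) hgmeas]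
  -- combine into single Rayleigh-type integrand supported on Ioi 0
  set Stot : ℝ := ∑ t, lam t * ((P t / P k) ^ (2/α)) with hStot
  have hStot_pos : 0 < Stot := by
    rw [hStot]
    refine Finset.sum_pos (fun t _ => ?_) Finset.univ_nonempty
    exact mul_pos (hlam t) (Real.rpow_pos_of_pos (div_pos (hP t) (hP k)) _)
  have hWS : π * lam k + W = π * Stot := by
    rw [hW, hStot, Finset.mul_sum, Fin.sum_univ_succAbove (fun t => π * (lam t * ((P t / P k) ^ (2/α)))) k]
    have : (P k / P k : ℝ) ^ (2/α) = 1 := by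
      rw [div_self (hP k).ne', Real.one_rpow]
    rw [this, mul_one]
    congr 1
    exact Finset.sum_congr rfl fun j _ => by rw [hσ]; ring
  have hpt : ∀ r : ℝ, (rayleighDens (lam k) * fun r => ENNReal.ofReal (Real.exp (-(W * r ^ 2)))) r
      = Set.indicator (Set.Ioi 0)
          (fun r => ENNReal.ofReal (2 * π * lam k * r * Real.exp (-(π * Stot * r ^ 2)))) r := by
    intro r
    rcases le_or_gt r 0 with h | h
    · rw [Set.indicator_of_notMem (s := Set.Ioi 0) (by simpa using h)]
      simp only [Pi.mul_apply, rayleighDens]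
      rcases eq_or_lt_of_le h with h0 | h0
      · rw [h0]; simp
      · rw [if_neg (not_le.2 h0)]; simp
    · rw [Set.indicator_of_mem (Set.mem_Ioi.mpr h)]
      simp only [Pi.mul_apply, rayleighDens, if_pos h.le]
      rw [← ENNReal.ofReal_mul (by have := hlam k; positivity)]
      congr 1
      rw [mul_assoc, ← Real.exp_add, ← hWS]
      ring_nf
  rw [lintegral_congr hpt, lintegral_indicator measurableSet_Ioi _]
  have hb : 0 < π * Stot := by positivity
  have hint : IntegrableOn (fun r => 2 * π * lam k * r * Real.exp (-(π * Stot * r ^ 2)))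
      (Set.Ioi (0:ℝ)) := by
    have h := ((integrable_mul_exp_neg_mul_sq hb).const_mul (2 * π * lam k)).integrableOn
      (s := Set.Ioi (0:ℝ))
    refine h.congr_fun (fun x _ => ?_) measurableSet_Ioi
    simp only [neg_mul]; ring
  rw [← ofReal_integral_eq_lintegral_ofReal hint
      ((ae_restrict_iff' measurableSet_Ioi).2 (Filter.Eventually.of_forall fun r hr => by
        have : (0:ℝ) < r := hr
        have := hlam k
        positivity))]
  rw [outer_integral (hlam k) hStot_pos]
  -- final arithmetic
  congr 1
  have hPk : (0:ℝ) < P k ^ (2/α) := Real.rpow_pos_of_pos (hP k) _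
  have hS' : Stot = (∑ t, lam t * P t ^ (2/α)) / P k ^ (2/α) := by
    rw [hStot, Finset.sum_div]
    exact Finset.sum_congr rfl fun t _ => by
      rw [Real.div_rpow (hP t).le (hP k).le, mul_div_assoc]
  rw [hS', div_div_eq_mul_div]
end

section
/- Let K ≥ 1 and let D_1, …, D_K be mutually independent nonnegative real random variables such that D_t has probability density f_t(r) = 2π λ_t r exp(−π λ_t r²) on r ≥ 0. Set Ξ = Σ_{t=1}^{K} λ_t P_t^{2/α}. Then for every tier index k and every x ≥ 0, the joint probability P( D_k ≤ x and for all t ≠ k, P_k D_k^{−α} > P_t D_t^{−α} ) equals ∫_0^x 2π λ_k r exp(−π Ξ r² / P_k^{2/α}) dr. Equivalently, conditioned on the association event {for all t ≠ k, P_k D_k^{−α} > P_t D_t^{−α}}, the distance D_k has density f_{D_k}(r) = (2π λ_k r / A_k) exp(−π Ξ r² / P_k^{2/α}) with A_k = λ_k P_k^{2/α}/Ξ. -/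
open MeasureTheory ProbabilityTheory Real Set Filter

section helpers



lemma rayleigh_tendsto (l : ℝ) (hl : 0 < l) :
    Tendsto (fun s : ℝ => -Real.exp (-(π * l * s ^ 2))) atTop (nhds 0) := by
  have h1 : Tendsto (fun s : ℝ => π * l * s ^ 2) atTop atTop :=
    (tendsto_pow_atTop two_ne_zero).const_mul_atTop (by positivity)
  have h2 : Tendsto (fun s : ℝ => -(π * l * s ^ 2)) atTop atBot :=
    tendsto_neg_atTop_atBot.comp h1
  have h3 := Real.tendsto_exp_atBot.comp h2
  simpa using h3.neg

lemma rayleigh_deriv (l : ℝ) (s : ℝ) :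
    HasDerivAt (fun u : ℝ => -Real.exp (-(π * l * u ^ 2)))
      (2 * π * l * s * Real.exp (-(π * l * s ^ 2))) s := by
  have h1 : HasDerivAt (fun u : ℝ => -(π * l * u ^ 2)) (-(π * l * (2 * s ^ 1))) s :=
    (((hasDerivAt_pow 2 s).const_mul (π * l)).neg).congr_deriv (by norm_num)
  have h2 := (h1.exp).neg
  refine h2.congr_deriv ?_
  ring

lemma rayleigh_tail (l a : ℝ) (hl : 0 < l) (ha : 0 ≤ a) :
    IntegrableOn (fun s => 2 * π * l * s * Real.exp (-(π * l * s ^ 2))) (Set.Ioi a) ∧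
    ∫ s in Set.Ioi a, 2 * π * l * s * Real.exp (-(π * l * s ^ 2)) = Real.exp (-(π * l * a ^ 2)) := by
  have hcont : ContinuousWithinAt (fun u : ℝ => -Real.exp (-(π * l * u ^ 2))) (Set.Ici a) a :=
    (Continuous.continuousWithinAt (by continuity))
  have hderiv := fun s (_ : s ∈ Set.Ioi a) => rayleigh_deriv l s
  have hpos : ∀ s ∈ Set.Ioi a, 0 ≤ 2 * π * l * s * Real.exp (-(π * l * s ^ 2)) := by
    intro s hs
    have hs0 : 0 ≤ s := ha.trans (le_of_lt hs)
    positivity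
  have htend := rayleigh_tendsto l hl
  refine ⟨integrableOn_Ioi_deriv_of_nonneg hcont hderiv hpos htend, ?_⟩
  rw [integral_Ioi_of_hasDerivAt_of_nonneg hcont hderiv hpos htend]
  simp

noncomputable def rdens (l : ℝ) : ℝ → ENNReal := fun r =>
  ENNReal.ofReal (if 0 ≤ r then 2 * π * l * r * Real.exp (-(π * l * r ^ 2)) else 0)

lemma rdens_indicator (l : ℝ) : rdens l = (Set.Ioi (0:ℝ)).indicator (rdens l) := by
  funext s
  rcases lt_trichotomy s 0 with h | h | h
  · rw [Set.indicator_of_notMem (by simpa using not_lt.mpr h.le : s ∉ Set.Ioi 0)]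
    simp [rdens, if_neg (not_le.mpr h)]
  · subst h; simp [rdens]
  · simp [Set.indicator_of_mem (Set.mem_Ioi.mpr h)]

lemma rdens_measure (l a : ℝ) (hl : 0 < l) (ha : 0 ≤ a) {A : Set ℝ} (hA : MeasurableSet A)
    (hcap : A ∩ Set.Ioi 0 = Set.Ioi a) :
    (volume.withDensity (rdens l)) A = ENNReal.ofReal (Real.exp (-(π * l * a ^ 2))) := by
  rw [withDensity_apply _ hA]
  calc ∫⁻ s in A, rdens l s
      = ∫⁻ s in A, (Set.Ioi (0:ℝ)).indicator (rdens l) s := by rw [← rdens_indicator]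
    _ = ∫⁻ s in Set.Ioi 0 ∩ A, rdens l s := by
        rw [lintegral_indicator measurableSet_Ioi, Measure.restrict_restrict measurableSet_Ioi]
    _ = ∫⁻ s in Set.Ioi a, rdens l s := by rw [Set.inter_comm, hcap]
    _ = ∫⁻ s in Set.Ioi a, ENNReal.ofReal (2 * π * l * s * Real.exp (-(π * l * s ^ 2))) := by
        refine setLIntegral_congr_fun measurableSet_Ioi ?_
        intro s hs
        simp only [rdens]
        rw [if_pos (ha.trans hs.le)]
    _ = ENNReal.ofReal (∫ s in Set.Ioi a, 2 * π * l * s * Real.exp (-(π * l * s ^ 2))) := by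
        rw [← ofReal_integral_eq_lintegral_ofReal (rayleigh_tail l a hl ha).1]
        refine (ae_restrict_iff' measurableSet_Ioi).mpr (Filter.Eventually.of_forall ?_)
        intro s hs
        have h0 : (0:ℝ) ≤ s := ha.trans (Set.mem_Ioi.mp hs).le
        positivity
    _ = ENNReal.ofReal (Real.exp (-(π * l * a ^ 2))) := by rw [(rayleigh_tail l a hl ha).2]

lemma measurable_rpow_const' (y : ℝ) (hy : y ≠ 0) : Measurable fun s : ℝ => s ^ y := by
  have heq : (fun s : ℝ => s ^ y) = fun s =>
      if s = 0 then 0 else Real.exp (Real.log s * y) * (if 0 < s then 1 else Real.cos (y * π)) := by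
    funext s
    rcases lt_trichotomy s 0 with h | h | h
    · rw [Real.rpow_def_of_neg h, if_neg (ne_of_lt h), if_neg (not_lt.mpr h.le)]
    · subst h; rw [Real.zero_rpow hy, if_pos rfl]
    · rw [Real.rpow_def_of_pos h, if_neg (ne_of_gt h), if_pos h, mul_one]
  rw [heq]
  exact Measurable.ite (measurableSet_eq) measurable_const
    (((Real.measurable_log.mul_const y).exp).mul
      (Measurable.ite measurableSet_Ioi measurable_const measurable_const))

lemma slice_iff (Pt Pk α r s : ℝ) (hPt : 0 < Pt) (hPk : 0 < Pk) (hα : 0 < α)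
    (hr : 0 < r) (hs : 0 < s) :
    Pt * s ^ (-α) < Pk * r ^ (-α) ↔ (Pt / Pk) ^ (1/α) * r < s := by
  have hc : (0:ℝ) < (Pt / Pk) ^ (1/α) := Real.rpow_pos_of_pos (div_pos hPt hPk) _
  have hcα : ((Pt / Pk) ^ (1/α)) ^ α = Pt / Pk := by
    rw [← Real.rpow_mul (div_pos hPt hPk).le, one_div_mul_cancel (ne_of_gt hα), Real.rpow_one]
  have hsα : (0:ℝ) < s ^ α := Real.rpow_pos_of_pos hs α
  have hrα : (0:ℝ) < r ^ α := Real.rpow_pos_of_pos hr α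
  rw [Real.rpow_neg hs.le, Real.rpow_neg hr.le,
    ← Real.rpow_lt_rpow_iff (mul_nonneg hc.le hr.le) hs.le hα,
    Real.mul_rpow hc.le hr.le, hcα, mul_comm Pt _, mul_comm Pk _, ← div_eq_inv_mul,
    ← div_eq_inv_mul, div_lt_div_iff₀ hsα hrα, div_mul_eq_mul_div, div_lt_iff₀ hPk,
    mul_comm (s ^ α) Pk]

lemma factor (l Pt Pk α r : ℝ) (hl : 0 < l) (hPt : 0 < Pt) (hPk : 0 < Pk) (hα : 0 < α)
    (hr : 0 < r) :
    (volume.withDensity (rdens l)) {s : ℝ | Pt * s ^ (-α) < Pk * r ^ (-α)} =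
      ENNReal.ofReal (Real.exp (-(π * (l * (Pt ^ (2/α) / Pk ^ (2/α))) * r ^ 2))) := by
  have hA : MeasurableSet {s : ℝ | Pt * s ^ (-α) < Pk * r ^ (-α)} :=
    measurableSet_lt ((measurable_rpow_const' (-α) (neg_ne_zero.mpr (ne_of_gt hα))).const_mul _) measurable_const
  have hc : (0:ℝ) < (Pt / Pk) ^ (1/α) := Real.rpow_pos_of_pos (div_pos hPt hPk) _
  have hcap : {s : ℝ | Pt * s ^ (-α) < Pk * r ^ (-α)} ∩ Set.Ioi 0 =
      Set.Ioi ((Pt / Pk) ^ (1/α) * r) := by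
    ext s
    simp only [Set.mem_inter_iff, Set.mem_setOf_eq, Set.mem_Ioi]
    constructor
    · rintro ⟨h1, h2⟩
      exact (slice_iff Pt Pk α r s hPt hPk hα hr h2).mp h1
    · intro h
      have hs : 0 < s := lt_trans (by positivity) h
      exact ⟨(slice_iff Pt Pk α r s hPt hPk hα hr hs).mpr h, hs⟩
  rw [rdens_measure l _ hl (by positivity) hA hcap]
  congr 1
  have hc2 : ((Pt / Pk) ^ (1/α)) ^ (2:ℕ) = Pt ^ (2/α) / Pk ^ (2/α) := by
    rw [← Real.rpow_natCast (((Pt / Pk) ^ (1/α))) 2, ← Real.rpow_mul (div_pos hPt hPk).le,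
      (by push_cast; ring : (1/α) * ((2:ℕ):ℝ) = 2/α), Real.div_rpow hPt.le hPk.le]
  rw [mul_pow, hc2]
  ring

end helpers

lemma rdens_measurable (l : ℝ) : Measurable (rdens l) := by
  refine Measurable.ennreal_ofReal ?_
  exact Measurable.ite measurableSet_Ici (by fun_prop) measurable_const

/-- Lemma 2 (serving-distance distribution): if `D_1, …, D_K` are mutually independent
nonnegative random variables, `D_t` having density `f_t(r) = 2π λ_t r exp(−π λ_t r²)` on
`r ≥ 0`, and `Ξ = Σ_t λ_t P_t^{2/α}`, then for every tier `k` and every `x ≥ 0`,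
`P(D_k ≤ x ∧ ∀ t ≠ k, P_k D_k^{−α} > P_t D_t^{−α})
  = ∫_0^x 2π λ_k r exp(−π Ξ r²/P_k^{2/α}) dr`,
i.e. conditioned on association to tier `k`, the serving distance has density
`(2π λ_k r / A_k) exp(−π Ξ r²/P_k^{2/α})` with `A_k = λ_k P_k^{2/α}/Ξ`. -/
theorem serving_distance_distribution
    {Ω : Type*} [MeasurableSpace Ω] (μ : Measure Ω) [IsProbabilityMeasure μ]
    (K : ℕ) (hK : 1 ≤ K) (lam P : Fin K → ℝ) (α : ℝ)
    (hlam : ∀ t, 0 < lam t) (hP : ∀ t, 0 < P t) (hα : 2 < α)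
    (D : Fin K → Ω → ℝ) (hmeas : ∀ t, Measurable (D t))
    (hpos : ∀ t ω, 0 ≤ D t ω)
    (hindep : iIndepFun D μ)
    (hdens : ∀ t, μ.map (D t) = volume.withDensity (fun r =>
      ENNReal.ofReal (if 0 ≤ r then 2 * π * lam t * r * Real.exp (-(π * lam t * r ^ 2)) else 0)))
    (k : Fin K) (x : ℝ) (hx : 0 ≤ x) :
    μ {ω | D k ω ≤ x ∧ ∀ t, t ≠ k → P k * D k ω ^ (-α) > P t * D t ω ^ (-α)} =
      ENNReal.ofReal (∫ r in Set.Ioc (0 : ℝ) x,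
        2 * π * lam k * r *
          Real.exp (-(π * (∑ t, lam t * P t ^ (2 / α)) * r ^ 2 / P k ^ (2 / α)))) := by
  classical
  have hα0 : (0:ℝ) < α := lt_trans two_pos hα
  have hαne : -α ≠ 0 := neg_ne_zero.mpr (ne_of_gt hα0)
  set ν : Fin K → Measure ℝ := fun t => μ.map (D t) with hνdef
  have hprob : ∀ t, IsProbabilityMeasure (ν t) := fun t =>
    Measure.isProbabilityMeasure_map (hmeas t).aemeasurable
  haveI := hprob
  have hnud : ∀ t, ν t = volume.withDensity (rdens (lam t)) := fun t => hdens t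
  -- the target set in the product space
  set S : Set (Fin K → ℝ) :=
    {y | y k ≤ x ∧ ∀ t, t ≠ k → P t * y t ^ (-α) < P k * y k ^ (-α)} with hSdef
  have hmeasS : MeasurableSet S := by
    have h1 : MeasurableSet {y : Fin K → ℝ | y k ≤ x} :=
      measurableSet_le (measurable_pi_apply k) measurable_const
    have h2 : ∀ t : Fin K,
        MeasurableSet {y : Fin K → ℝ | P t * y t ^ (-α) < P k * y k ^ (-α)} := fun t =>
      measurableSet_lt
        (((measurable_rpow_const' (-α) hαne).comp (measurable_pi_apply t)).const_mul _)
        (((measurable_rpow_const' (-α) hαne).comp (measurable_pi_apply k)).const_mul _)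
    have hSeq : S = {y : Fin K → ℝ | y k ≤ x} ∩
        ⋂ t, {y : Fin K → ℝ | t ≠ k → P t * y t ^ (-α) < P k * y k ^ (-α)} := by
      ext y; simp [hSdef, Set.mem_iInter]
    rw [hSeq]
    refine h1.inter (MeasurableSet.iInter fun t => ?_)
    by_cases ht : t = k
    · simp [ht]
    · simpa [ht] using h2 t
  have hjmeas : Measurable fun ω (t : Fin K) => D t ω := measurable_pi_lambda _ hmeas
  have hpi : Measure.pi ν = μ.map fun ω t => D t ω := by
    refine Measure.pi_eq fun s hs => ?_
    rw [Measure.map_apply hjmeas (MeasurableSet.univ_pi hs)]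
    have hpre : (fun ω t => D t ω) ⁻¹' Set.pi Set.univ s = ⋂ t ∈ Finset.univ, D t ⁻¹' s t := by
      ext ω; simp [Set.mem_pi]
    rw [hpre, hindep.measure_inter_preimage_eq_mul Finset.univ (fun i _ => hs i)]
    exact Finset.prod_congr rfl fun t _ => (Measure.map_apply (hmeas t) (hs t)).symm
  have hevent : {ω | D k ω ≤ x ∧ ∀ t, t ≠ k → P k * D k ω ^ (-α) > P t * D t ω ^ (-α)}
      = (fun ω (t : Fin K) => D t ω) ⁻¹' S := rfl
  rw [hevent, ← Measure.map_apply hjmeas hmeasS, ← hpi]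
  obtain ⟨p, hp⟩ : ∃ p : Fin K → Prop, p = fun i => i = k := ⟨_, rfl⟩
  have hp' : ∀ i, p i ↔ i = k := fun i => by rw [hp]
  haveI : DecidablePred p := fun i => decidable_of_iff (i = k) (hp' i).symm
  haveI hU : Unique {i : Fin K // p i} :=
    ⟨⟨⟨k, (hp' k).mpr rfl⟩⟩, fun a => Subtype.ext ((hp' a.1).mp a.2)⟩
  set ν2 : Measure ({i : Fin K // ¬ p i} → ℝ) := Measure.pi fun i => ν ↑i with hν2
  set e := MeasurableEquiv.piEquivPiSubtypeProd (fun _ : Fin K => ℝ) p with hedef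
  have hpres := measurePreserving_piEquivPiSubtypeProd ν p
  have hT : MeasurableSet (e.symm ⁻¹' S) := e.symm.measurable hmeasS
  have h1 : Measure.pi ν S
      = ((Measure.pi fun i : {i : Fin K // p i} => ν ↑i).prod ν2) (e.symm ⁻¹' S) := by
    rw [hν2, ← hpres.map_eq, Measure.map_apply e.measurable hT]
    congr 1
    ext y
    simp
  rw [h1, Measure.prod_apply hT]
  -- the inner slice
  have hsymm : ∀ (r : ℝ) (z : {i : Fin K // ¬ p i} → ℝ) (i : Fin K),
      e.symm ((fun _ : {i : Fin K // p i} => r), z) i = if h : p i then r else z ⟨i, h⟩ := by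
    intro r z i
    simp [hedef, MeasurableEquiv.piEquivPiSubtypeProd, Equiv.piEquivPiSubtypeProd]
  have hslice : ∀ r : ℝ, (Prod.mk (fun _ : {i : Fin K // p i} => r) ⁻¹' (e.symm ⁻¹' S))
      = if r ≤ x then Set.pi Set.univ
          (fun t : {i : Fin K // ¬ p i} => {s : ℝ | P ↑t * s ^ (-α) < P k * r ^ (-α)})
        else ∅ := by
    intro r
    ext z
    have hyk : e.symm ((fun _ : {i : Fin K // p i} => r), z) k = r := by
      rw [hsymm, dif_pos ((hp' k).mpr rfl)]
    have hyt : ∀ (t : {i : Fin K // ¬ p i}),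
        e.symm ((fun _ : {i : Fin K // p i} => r), z) ↑t = z t := by
      intro t; rw [hsymm, dif_neg t.2]
    have hmem : z ∈ Prod.mk (fun _ : {i : Fin K // p i} => r) ⁻¹' (e.symm ⁻¹' S)
        ↔ (r ≤ x ∧ ∀ t : {i : Fin K // ¬ p i}, P ↑t * (z t) ^ (-α) < P k * r ^ (-α)) := by
      simp only [Set.mem_preimage, hSdef, Set.mem_setOf_eq, hyk]
      constructor
      · rintro ⟨h1, h2⟩
        exact ⟨h1, fun t => by
          have h3 := h2 ↑t (fun hh => t.2 ((hp' _).mpr hh)); rwa [hyt t] at h3⟩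
      · rintro ⟨h1, h2⟩
        refine ⟨h1, fun t ht => ?_⟩
        have h3 := h2 ⟨t, fun hpt => ht ((hp' t).mp hpt)⟩
        rwa [← hyt ⟨t, fun hpt => ht ((hp' t).mp hpt)⟩] at h3
    rw [hmem]
    by_cases hrx : r ≤ x
    · simp [hrx, Set.mem_pi]
    · simp [hrx]
  set E : ℝ := ∑ t : {i : Fin K // ¬ p i}, lam ↑t * (P ↑t ^ (2/α) / P k ^ (2/α)) with hEdef
  set f : ℝ → ENNReal := fun r =>
    ν2 (Prod.mk (fun _ : {i : Fin K // p i} => r) ⁻¹' (e.symm ⁻¹' S)) with hfdef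
  have hfmeas : Measurable f :=
    (measurable_measure_prodMk_left hT).comp
      (measurable_pi_lambda _ fun _ => measurable_id)
  have hFf : ∀ w : {i : Fin K // p i} → ℝ,
      ν2 (Prod.mk w ⁻¹' (e.symm ⁻¹' S)) = f ((MeasurableEquiv.funUnique {i : Fin K // p i} ℝ) w) := by
    intro w
    have hw2 : (fun _ : {i : Fin K // p i} =>
        (MeasurableEquiv.funUnique {i : Fin K // p i} ℝ) w) = w :=
      funext fun i => congrArg w (Subsingleton.elim default i)
    simp only [hfdef]
    rw [hw2]
  rw [lintegral_congr hFf]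
  have hmp : (fun i : {i : Fin K // p i} => ν ↑i) = fun _ => ν k :=
    funext fun i => congrArg ν ((hp' i.1).mp i.2)
  rw [hmp]
  have hlint := (measurePreserving_funUnique (ν k) {i : Fin K // p i}).lintegral_comp_emb
    (MeasurableEquiv.measurableEmbedding _) f
  have hstep : (∫⁻ a : {i : Fin K // p i} → ℝ,
        f ((MeasurableEquiv.funUnique {i : Fin K // p i} ℝ) a)
      ∂(Measure.pi fun _ : {i : Fin K // p i} => ν k)) = ∫⁻ r, f r ∂(ν k) := by
    convert hlint using 2
    congr!
  rw [hstep]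
  -- slice value for r > 0
  have hprod : ∀ r : ℝ, 0 < r → f r =
      if r ≤ x then ENNReal.ofReal (Real.exp (-(π * E * r ^ 2))) else 0 := by
    intro r hr
    simp only [hfdef]
    rw [hslice r]
    by_cases hrx : r ≤ x
    · rw [if_pos hrx, if_pos hrx, hν2, Measure.pi_pi]
      have hfac : ∀ t : {i : Fin K // ¬ p i},
          ν ↑t {s : ℝ | P ↑t * s ^ (-α) < P k * r ^ (-α)} =
          ENNReal.ofReal (Real.exp (-(π * (lam ↑t * (P ↑t ^ (2/α) / P k ^ (2/α))) * r ^ 2))) := by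
        intro t
        rw [hnud ↑t]
        exact factor (lam ↑t) (P ↑t) (P k) α r (hlam _) (hP _) (hP k) hα0 hr
      rw [Finset.prod_congr rfl fun t _ => hfac t,
        ← ENNReal.ofReal_prod_of_nonneg (fun t _ => (Real.exp_pos _).le), ← Real.exp_sum]
      congr 2
      rw [hEdef, Finset.mul_sum, Finset.sum_mul, Finset.sum_neg_distrib]
    · rw [if_neg hrx, if_neg hrx, measure_empty]
  have hPk2 : (0:ℝ) < P k ^ (2/α) := Real.rpow_pos_of_pos (hP k) _
  have hEsum : lam k + E = (∑ t, lam t * P t ^ (2/α)) / P k ^ (2/α) := by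
    have hsub : E = ∑ t ∈ Finset.univ.erase k, lam t * (P t ^ (2/α) / P k ^ (2/α)) := by
      rw [hEdef]
      exact (Finset.sum_subtype (Finset.univ.erase k)
        (fun t => by rw [Finset.mem_erase]; simp [hp' t])
        (fun t => lam t * (P t ^ (2/α) / P k ^ (2/α)))).symm
    rw [eq_div_iff (ne_of_gt hPk2), add_mul, hsub, Finset.sum_mul]
    have h2 : ∀ t ∈ Finset.univ.erase k,
        lam t * (P t ^ (2/α) / P k ^ (2/α)) * P k ^ (2/α) = lam t * P t ^ (2/α) := by
      intro t _
      field_simp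
    rw [Finset.sum_congr rfl h2,
      ← Finset.add_sum_erase Finset.univ (fun t => lam t * P t ^ (2/α)) (Finset.mem_univ k)]
  -- outer integral
  rw [hnud k, lintegral_withDensity_eq_lintegral_mul volume (rdens_measurable (lam k)) hfmeas]
  have hsupp : Function.support (rdens (lam k) * f) ⊆ Set.Ioi 0 := by
    intro r hr
    by_contra h
    apply hr
    have h0 : rdens (lam k) r = 0 := by
      conv_lhs => rw [rdens_indicator]
      exact Set.indicator_of_notMem h _
    simp [h0]
  rw [← setLIntegral_eq_of_support_subset hsupp]
  have hcongr : ∀ r ∈ Set.Ioi (0:ℝ), (rdens (lam k) * f) r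
      = (Set.Ioc (0:ℝ) x).indicator (fun r => ENNReal.ofReal (2 * π * lam k * r *
          Real.exp (-(π * (∑ t, lam t * P t ^ (2/α)) * r ^ 2 / P k ^ (2/α))))) r := by
    intro r hr
    have hr0 : (0:ℝ) < r := hr
    simp only [Pi.mul_apply]
    rw [hprod r hr0]
    by_cases hrx : r ≤ x
    · rw [if_pos hrx, Set.indicator_of_mem (Set.mem_Ioc.mpr ⟨hr0, hrx⟩)]
      have hd : rdens (lam k) r
          = ENNReal.ofReal (2 * π * lam k * r * Real.exp (-(π * lam k * r ^ 2))) := by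
        simp only [rdens]; rw [if_pos hr0.le]
      have hS' : (∑ t, lam t * P t ^ (2/α)) = (lam k + E) * P k ^ (2/α) := by
        rw [hEsum, div_mul_cancel₀ _ (ne_of_gt hPk2)]
      have hexp : -(π * lam k * r ^ 2) + -(π * E * r ^ 2)
          = -(π * (∑ t, lam t * P t ^ (2/α)) * r ^ 2 / P k ^ (2/α)) := by
        rw [hS']
        field_simp
        ring
      rw [hd, ← ENNReal.ofReal_mul (by have := hlam k; positivity)]
      congr 1
      rw [mul_assoc (2 * π * lam k * r), ← Real.exp_add, hexp]
    · rw [if_neg hrx, Set.indicator_of_notMem (fun hc => hrx hc.2), mul_zero]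
  rw [setLIntegral_congr_fun measurableSet_Ioi hcongr,
    lintegral_indicator measurableSet_Ioc, Measure.restrict_restrict measurableSet_Ioc,
    Set.inter_eq_left.mpr Set.Ioc_subset_Ioi_self]
  rw [← ofReal_integral_eq_lintegral_ofReal
    (Continuous.integrableOn_Ioc (by fun_prop))
    ((ae_restrict_iff' measurableSet_Ioc).mpr (Filter.Eventually.of_forall fun r hr => by
      have h0 : (0:ℝ) < r := hr.1
      have := hlam k
      positivity))]
end

section
/- Consider K ≥ 1 tiers with densities λ_t > 0 and powers P_t > 0, a path-loss exponent α > 2, user power P_U > 0, jammer power P_J > 0 and jammer density λ_J ≥ 0. Set Ξ = Σ_t λ_t P_t^{2/α}, A_k = λ_k P_k^{2/α}/Ξ, sinc(x) = sin(πx)/(πx), and for θ > 0 define J(θ) = ∫_1^∞ u/(u^{α} + θ) du. Then for every tier index k, ∫_0^∞ exp( −[ 2π Ξ θ J(θ) + π( (θ P_U)^{2/α} Σ_t λ_t + (θ P_J)^{2/α} λ_J ) / sinc(2/α) ] · r²/P_k^{2/α} ) · (2π λ_k r / A_k) exp( −π Ξ r² / P_k^{2/α} ) dr = Ξ / ( Ξ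 (1 + 2 θ J(θ)) + ( (θ P_U)^{2/α} Σ_t λ_t + (θ P_J)^{2/α} λ_J ) / sinc(2/α) ). In particular, this quantity is independent of the tier index k. -/
open MeasureTheory Real

section Aux
open Set Filter

lemma aux_integral_r_exp {b : ℝ} (hb : 0 < b) :
    ∫ r in Ioi (0:ℝ), r * Real.exp (-b * r ^ 2) = (2 * b)⁻¹ := by
  have hderiv : ∀ x ∈ Ioi (0:ℝ),
      HasDerivAt (fun x : ℝ => -(2 * b)⁻¹ * Real.exp (-b * x ^ 2))
        (x * Real.exp (-b * x ^ 2)) x := by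
    intro x _
    have h1 : HasDerivAt (fun x : ℝ => -b * x ^ 2) (-b * (2 * x)) x := by
      simpa using ((hasDerivAt_pow 2 x).const_mul (-b))
    have h2 := (h1.exp).const_mul (-(2 * b)⁻¹)
    refine h2.congr_deriv ?_
    linear_combination (x * Real.exp (-b * x ^ 2)) * mul_inv_cancel₀ hb.ne'
  have hcont : ContinuousWithinAt (fun x : ℝ => -(2 * b)⁻¹ * Real.exp (-b * x ^ 2))
      (Ici 0) 0 := by
    exact (Continuous.continuousWithinAt (by continuity))
  have hint : IntegrableOn (fun x : ℝ => x * Real.exp (-b * x ^ 2)) (Ioi 0) :=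
    (integrable_mul_exp_neg_mul_sq hb).integrableOn
  have htend : Tendsto (fun x : ℝ => -(2 * b)⁻¹ * Real.exp (-b * x ^ 2)) atTop (nhds 0) := by
    have : Tendsto (fun x : ℝ => Real.exp (-b * x ^ 2)) atTop (nhds 0) := by
      have h : Tendsto (fun x : ℝ => -b * x ^ 2) atTop atBot := by
        apply Tendsto.const_mul_atTop_of_neg (neg_lt_zero.mpr hb)
        exact tendsto_pow_atTop (by norm_num)
      exact Real.tendsto_exp_atBot.comp h
    simpa using this.const_mul (-(2 * b)⁻¹)
  have := integral_Ioi_of_hasDerivAt_of_tendsto hcont hderiv hint htend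
  rw [this]
  simp [mul_inv]

end Aux

/-- Corollary 1: with `Ξ = Σ_t λ_t P_t^{2/α}`, `A_k = λ_k P_k^{2/α}/Ξ`,
`S = sinc(2/α) = sin(2π/α)/(2π/α)` and `J(θ) = ∫_1^∞ u/(u^α + θ) du`, the tier-conditional
connection probability integral
`∫_0^∞ exp(−[2πΞθJ(θ) + π((θP_U)^{2/α} Σ_t λ_t + (θP_J)^{2/α} λ_J)/S] r²/P_k^{2/α})
   · (2πλ_k r/A_k) exp(−πΞ r²/P_k^{2/α}) dr`
equals `Ξ/(Ξ(1 + 2θJ(θ)) + ((θP_U)^{2/α} Σ_t λ_t + (θP_J)^{2/α} λ_J)/S)`,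
independently of the tier index `k`. -/
theorem connection_probability_tier_independent
    (K : ℕ) (hK : 1 ≤ K) (lam P : Fin K → ℝ) (α PU PJ lamJ θ : ℝ)
    (hlam : ∀ t, 0 < lam t) (hP : ∀ t, 0 < P t) (hα : 2 < α)
    (hPU : 0 < PU) (hPJ : 0 < PJ) (hlamJ : 0 ≤ lamJ) (hθ : 0 < θ)
    (k : Fin K) (Ξ S J : ℝ)
    (hΞ : Ξ = ∑ t, lam t * P t ^ (2 / α))
    (hS : S = Real.sin (π * (2 / α)) / (π * (2 / α)))
    (hJ : J = ∫ u in Set.Ioi (1 : ℝ), u / (u ^ α + θ)) :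
    (∫ r in Set.Ioi (0 : ℝ),
        Real.exp (-((2 * π * Ξ * θ * J +
            π * ((θ * PU) ^ (2 / α) * (∑ t, lam t) + (θ * PJ) ^ (2 / α) * lamJ) / S) *
          r ^ 2 / P k ^ (2 / α))) *
          (2 * π * lam k * r / (lam k * P k ^ (2 / α) / Ξ)) *
          Real.exp (-(π * Ξ * r ^ 2 / P k ^ (2 / α)))) =
      Ξ / (Ξ * (1 + 2 * θ * J) +
        ((θ * PU) ^ (2 / α) * (∑ t, lam t) + (θ * PJ) ^ (2 / α) * lamJ) / S) := by
  have hΞpos : 0 < Ξ := by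
    rw [hΞ]
    apply Finset.sum_pos (fun t _ => mul_pos (hlam t) (Real.rpow_pos_of_pos (hP t) _))
    exact ⟨k, Finset.mem_univ k⟩
  have hsumpos : 0 < ∑ t, lam t :=
    Finset.sum_pos (fun t _ => hlam t) ⟨k, Finset.mem_univ k⟩
  have hSpos : 0 < S := by
    rw [hS]
    apply div_pos _ (by positivity)
    apply Real.sin_pos_of_pos_of_lt_pi (by positivity)
    calc π * (2 / α) < π * 1 := by
          apply mul_lt_mul_of_pos_left _ Real.pi_pos
          rw [div_lt_one (by linarith)]; linarith
      _ = π := mul_one π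
  have hJnn : 0 ≤ J := by
    rw [hJ]
    apply setIntegral_nonneg measurableSet_Ioi
    intro u hu
    have hu1 : (1:ℝ) < u := hu
    have : 0 < u ^ α + θ := by
      have : (0:ℝ) < u ^ α := Real.rpow_pos_of_pos (by linarith) α
      linarith
    positivity
  set p : ℝ := P k ^ (2 / α) with hpdef
  have hp : 0 < p := Real.rpow_pos_of_pos (hP k) _
  set Q : ℝ := (θ * PU) ^ (2 / α) * (∑ t, lam t) + (θ * PJ) ^ (2 / α) * lamJ with hQdef
  have hQpos : 0 < Q := by
    rw [hQdef]
    have h1 : 0 < (θ * PU) ^ (2 / α) * ∑ t, lam t :=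
      mul_pos (Real.rpow_pos_of_pos (by positivity) _) hsumpos
    have h2 : 0 ≤ (θ * PJ) ^ (2 / α) * lamJ :=
      mul_nonneg (Real.rpow_pos_of_pos (by positivity) _).le hlamJ
    linarith
  set a : ℝ := 2 * π * Ξ * θ * J + π * Q / S with hadef
  have hapos : 0 < a := by
    rw [hadef]
    have h1 : 0 ≤ 2 * π * Ξ * θ * J := by positivity
    have h2 : 0 < π * Q / S := by positivity
    linarith
  have hb : 0 < (a + π * Ξ) / p := by positivity
  have heq : ∀ r : ℝ,
      Real.exp (-(a * r ^ 2 / p)) * (2 * π * lam k * r / (lam k * p / Ξ)) *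
        Real.exp (-(π * Ξ * r ^ 2 / p)) =
      (2 * π * Ξ / p) * (r * Real.exp (-((a + π * Ξ) / p) * r ^ 2)) := by
    intro r
    rw [mul_comm (Real.exp _) _, mul_assoc, ← Real.exp_add]
    have hc : 2 * π * lam k * r / (lam k * p / Ξ) = (2 * π * Ξ / p) * r := by
      field_simp [hp.ne', (hlam k).ne', hΞpos.ne']
    rw [hc]
    have he : -(a * r ^ 2 / p) + -(π * Ξ * r ^ 2 / p) = -((a + π * Ξ) / p) * r ^ 2 := by
      field_simp
      ring
    rw [he]
    ring
  calc (∫ r in Set.Ioi (0 : ℝ),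
        Real.exp (-(a * r ^ 2 / p)) * (2 * π * lam k * r / (lam k * p / Ξ)) *
          Real.exp (-(π * Ξ * r ^ 2 / p)))
      = ∫ r in Set.Ioi (0 : ℝ),
          (2 * π * Ξ / p) * (r * Real.exp (-((a + π * Ξ) / p) * r ^ 2)) := by
        apply setIntegral_congr_fun measurableSet_Ioi
        intro r _
        exact heq r
    _ = (2 * π * Ξ / p) * ∫ r in Set.Ioi (0 : ℝ),
          r * Real.exp (-((a + π * Ξ) / p) * r ^ 2) := integral_const_mul _ _
    _ = (2 * π * Ξ / p) * (2 * ((a + π * Ξ) / p))⁻¹ := by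
        rw [aux_integral_r_exp hb]
    _ = Ξ / (Ξ * (1 + 2 * θ * J) + Q / S) := by
        have h1 : 0 < 1 + 2 * θ * J := by positivity
        have hden : 0 < Ξ * (1 + 2 * θ * J) + Q / S := by
          have h2 : 0 < Ξ * (1 + 2 * θ * J) := mul_pos hΞpos h1
          have h3 : 0 < Q / S := by positivity
          linarith
        rw [hadef]
        field_simp
        ring
end
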